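/- Assume ξ and η are mutually singular. Then for every measurable f : ℝ → [0,∞], ∫ f(s) ξ(ds) = ∫ f(ζ⁻¹(t)) ξ*(dt); that is, ξ is the image measure of ξ* under the map ζ⁻¹. -/

import Mathlib

open MeasureTheory

/-- The purely atomic part `μ^d` of a measure on `ℝ`. -/
noncomputable def atomicPart (μ : Measure ℝ) : Measure ℝ :=
  μ.restrict {t : ℝ | μ {t} ≠ 0}

/-- The diffuse part `μ^c` of a measure on `ℝ`. -/
noncomputable def diffusePart (μ : Measure ℝ) : Measure ℝ :=
  μ.restrict {t : ℝ | μ {t} = 0}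

/-- The time change `ζ`. -/
noncomputable def zeta (ξ η : Measure ℝ) (s : ℝ) : ℝ :=
  if 0 ≤ s then
    s + (atomicPart ξ (Set.Ico 0 s)).toReal + (atomicPart η (Set.Ico 0 s)).toReal
  else
    s - (atomicPart ξ (Set.Ico s 0)).toReal - (atomicPart η (Set.Ico s 0)).toReal

/-- The generalized inverse `ζ⁻¹` of the time change `ζ`. -/
noncomputable def zetaInv (ξ η : Measure ℝ) (t : ℝ) : ℝ :=
  sInf {s : ℝ | t ≤ zeta ξ η s}

/-- The stretched measure `μ*` built from `μ` using the time change `ζ` of `(ξ, η)`. -/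
noncomputable def starM (ξ η μ : Measure ℝ) : Measure ℝ :=
  (diffusePart μ).map (zeta ξ η) +
    (atomicPart μ).bind fun t =>
      (μ {t})⁻¹ • volume.restrict (Set.Icc (zeta ξ η t) (zeta ξ η t + (μ {t}).toReal))

section Aux

variable (ξ η : Measure ℝ) [IsLocallyFiniteMeasure ξ] [IsLocallyFiniteMeasure η]

lemma atomicPart_Ico_lt_top (μ : Measure ℝ) [IsLocallyFiniteMeasure μ] (a b : ℝ) :
    atomicPart μ (Set.Ico a b) < ⊤ :=
  (Measure.restrict_apply_le _ _).trans_lt measure_Ico_lt_top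

lemma atomicPart_toReal_add (μ : Measure ℝ) [IsLocallyFiniteMeasure μ] {a b c : ℝ}
    (h1 : a ≤ b) (h2 : b ≤ c) :
    (atomicPart μ (Set.Ico a c)).toReal =
      (atomicPart μ (Set.Ico a b)).toReal + (atomicPart μ (Set.Ico b c)).toReal := by
  rw [← Set.Ico_union_Ico_eq_Ico h1 h2,
    measure_union (Set.Ico_disjoint_Ico_same) measurableSet_Ico,
    ENNReal.toReal_add (atomicPart_Ico_lt_top μ a b).ne (atomicPart_Ico_lt_top μ b c).ne]

lemma zeta_sub {u s : ℝ} (h : u ≤ s) :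
    zeta ξ η s = zeta ξ η u + (s - u) + (atomicPart ξ (Set.Ico u s)).toReal
      + (atomicPart η (Set.Ico u s)).toReal := by
  unfold zeta
  rcases le_or_gt 0 u with hu | hu
  · rw [if_pos hu, if_pos (hu.trans h), atomicPart_toReal_add ξ hu h,
      atomicPart_toReal_add η hu h]
    ring
  · rcases le_or_gt 0 s with hs | hs
    · rw [if_pos hs, if_neg (not_le.2 hu), atomicPart_toReal_add ξ hu.le hs,
        atomicPart_toReal_add η hu.le hs]
      ring
    · rw [if_neg (not_le.2 hu), if_neg (not_le.2 hs), atomicPart_toReal_add ξ h hs.le,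
        atomicPart_toReal_add η h hs.le]
      ring

lemma monotone_zeta : Monotone (zeta ξ η) := by
  intro u s h
  have := zeta_sub ξ η h
  have h1 := ENNReal.toReal_nonneg (a := atomicPart ξ (Set.Ico u s))
  have h2 := ENNReal.toReal_nonneg (a := atomicPart η (Set.Ico u s))
  linarith

lemma zeta_lt {u s : ℝ} (h : u < s) : zeta ξ η u < zeta ξ η s := by
  have := zeta_sub ξ η h.le
  have h1 := ENNReal.toReal_nonneg (a := atomicPart ξ (Set.Ico u s))
  have h2 := ENNReal.toReal_nonneg (a := atomicPart η (Set.Ico u s))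
  linarith

lemma zeta_le_self {u : ℝ} (h : u < 0) : zeta ξ η u ≤ u := by
  rw [zeta, if_neg (not_le.2 h)]
  have h1 := ENNReal.toReal_nonneg (a := atomicPart ξ (Set.Ico u 0))
  have h2 := ENNReal.toReal_nonneg (a := atomicPart η (Set.Ico u 0))
  linarith

lemma self_le_zeta {u : ℝ} (h : 0 ≤ u) : u ≤ zeta ξ η u := by
  rw [zeta, if_pos h]
  have h1 := ENNReal.toReal_nonneg (a := atomicPart ξ (Set.Ico 0 u))
  have h2 := ENNReal.toReal_nonneg (a := atomicPart η (Set.Ico 0 u))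
  linarith

lemma atomicPart_singleton (μ : Measure ℝ) (s : ℝ) : atomicPart μ {s} = μ {s} := by
  rw [atomicPart, Measure.restrict_apply (measurableSet_singleton s)]
  rcases eq_or_ne (μ {s}) 0 with h | h
  · rw [h]
    exact le_antisymm ((measure_mono Set.inter_subset_left).trans h.le) zero_le
  · have he : {s} ∩ {t : ℝ | μ {t} ≠ 0} = {s} :=
      Set.inter_eq_left.2 (Set.singleton_subset_iff.2 h)
    rw [he]

lemma zeta_atom_gap {s u : ℝ} (h : s < u) :
    zeta ξ η s + (ξ {s}).toReal + (u - s) ≤ zeta ξ η u := by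
  have hz := zeta_sub ξ η h.le
  have h1 : (ξ {s}).toReal ≤ (atomicPart ξ (Set.Ico s u)).toReal := by
    rw [← atomicPart_singleton ξ s]
    exact ENNReal.toReal_mono (atomicPart_Ico_lt_top ξ s u).ne
      (measure_mono (Set.singleton_subset_iff.2 ⟨le_refl s, h⟩))
  have h2 := ENNReal.toReal_nonneg (a := atomicPart η (Set.Ico s u))
  linarith

lemma zetaInv_eq {s t : ℝ} (h1 : zeta ξ η s ≤ t) (h2 : t ≤ zeta ξ η s + (ξ {s}).toReal) :
    zetaInv ξ η t = s := by
  have hub : ∀ u, s < u → t ≤ zeta ξ η u := by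
    intro u hu
    have := zeta_atom_gap ξ η hu
    linarith
  apply csInf_eq_of_forall_ge_of_forall_gt_exists_lt
  · exact ⟨s + 1, hub _ (by linarith)⟩
  · intro a ha
    by_contra hc
    push_neg at hc
    have := zeta_lt ξ η hc
    have ha' : t ≤ zeta ξ η a := ha
    linarith
  · intro w hw
    have hm : s < min w (s + 1) := lt_min hw (by linarith)
    refine ⟨(s + min w (s + 1)) / 2, hub _ (by linarith), ?_⟩
    have := min_le_left w (s + 1)
    linarith

lemma zetaInv_zeta (s : ℝ) : zetaInv ξ η (zeta ξ η s) = s :=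
  zetaInv_eq ξ η le_rfl (by have := ENNReal.toReal_nonneg (a := ξ {s}); linarith)

lemma monotone_zetaInv : Monotone (zetaInv ξ η) := by
  intro t1 t2 h
  apply csInf_le_csInf
  · refine ⟨min t1 0, fun u hu => ?_⟩
    have hu' : t1 ≤ zeta ξ η u := hu
    rcases lt_or_ge u 0 with hc | hc
    · have := zeta_le_self ξ η hc
      have := min_le_left t1 0
      linarith
    · have := min_le_right t1 0
      linarith
  · exact ⟨max t2 0, le_trans (le_max_left _ _) (self_le_zeta ξ η (le_max_right _ _))⟩
  · exact fun u hu => le_trans h hu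

lemma measurable_meas_singleton (μ : Measure ℝ) [SigmaFinite μ] :
    Measurable fun t : ℝ => μ {t} := by
  have hd : MeasurableSet {p : ℝ × ℝ | p.2 = p.1} :=
    measurableSet_eq_fun measurable_snd measurable_fst
  have h := measurable_measure_prodMk_left (ν := μ) hd
  have he : ∀ t : ℝ, Prod.mk t ⁻¹' {p : ℝ × ℝ | p.2 = p.1} = {t} := by
    intro t; ext x; simp [Set.mem_preimage, eq_comm]
  simpa only [he] using h

lemma measurable_kernel :
    Measurable fun t : ℝ =>
      (ξ {t})⁻¹ • volume.restrict (Set.Icc (zeta ξ η t) (zeta ξ η t + (ξ {t}).toReal)) := by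
  have hz : Measurable (zeta ξ η) := (monotone_zeta ξ η).measurable
  have hm : Measurable fun t : ℝ => ξ {t} := measurable_meas_singleton ξ
  apply Measure.measurable_of_measurable_coe
  intro s hs
  simp only [Measure.smul_apply, smul_eq_mul, Measure.restrict_apply hs]
  apply Measurable.mul hm.inv
  have hT : MeasurableSet {p : ℝ × ℝ | p.2 ∈ s ∧ zeta ξ η p.1 ≤ p.2
      ∧ p.2 ≤ zeta ξ η p.1 + (ξ {p.1}).toReal} := by
    exact MeasurableSet.inter (measurable_snd hs) (MeasurableSet.inter
      (measurableSet_le (hz.comp measurable_fst) measurable_snd)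
      (measurableSet_le measurable_snd
        ((hz.comp measurable_fst).add ((hm.comp measurable_fst).ennreal_toReal))))
  have h := measurable_measure_prodMk_left (ν := volume) hT
  have he : ∀ t : ℝ, Prod.mk t ⁻¹' {p : ℝ × ℝ | p.2 ∈ s ∧ zeta ξ η p.1 ≤ p.2
      ∧ p.2 ≤ zeta ξ η p.1 + (ξ {p.1}).toReal}
      = s ∩ Set.Icc (zeta ξ η t) (zeta ξ η t + (ξ {t}).toReal) := by
    intro t; ext x
    simp only [Set.mem_preimage, Set.mem_setOf_eq, Set.mem_inter_iff, Set.mem_Icc]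
  simpa only [he] using h

end Aux

/-- Lemma 3.3 (change of variables): `ξ` is the image of `ξ*` under `ζ⁻¹`, i.e.
`∫ f(s) ξ(ds) = ∫ f(ζ⁻¹(t)) ξ*(dt)` for every measurable `f : ℝ → [0,∞]`. -/
theorem lintegral_starM (ξ η : Measure ℝ)
    [IsLocallyFiniteMeasure ξ] [IsLocallyFiniteMeasure η]
    (hsing : ξ ⟂ₘ η) (f : ℝ → ENNReal) (hf : Measurable f) :
    ∫⁻ s, f s ∂ξ = ∫⁻ t, f (zetaInv ξ η t) ∂(starM ξ η ξ) := by
  have hzi : Measurable (zetaInv ξ η) := (monotone_zetaInv ξ η).measurable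
  have hA : MeasurableSet {t : ℝ | ξ {t} ≠ 0} :=
    (measurable_meas_singleton ξ) (measurableSet_singleton 0).compl
  rw [starM, lintegral_add_measure,
    lintegral_map (show Measurable fun t => f (zetaInv ξ η t) from hf.comp hzi) (monotone_zeta ξ η).measurable,
    Measure.lintegral_bind (measurable_kernel ξ η).aemeasurable (show Measurable fun t => f (zetaInv ξ η t) from hf.comp hzi).aemeasurable]
  have h1 : ∫⁻ s, f (zetaInv ξ η (zeta ξ η s)) ∂(diffusePart ξ) = ∫⁻ s, f s ∂(diffusePart ξ) :=
    lintegral_congr fun s => by rw [zetaInv_zeta]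
  have h2 : (∫⁻ t, ∫⁻ v, f (zetaInv ξ η v)
        ∂((ξ {t})⁻¹ • volume.restrict (Set.Icc (zeta ξ η t) (zeta ξ η t + (ξ {t}).toReal)))
        ∂(atomicPart ξ)) = ∫⁻ t, f t ∂(atomicPart ξ) := by
    rw [atomicPart]
    apply setLIntegral_congr_fun hA
    intro t ht
    have h0 : ξ {t} ≠ 0 := ht
    have hfin : ξ {t} ≠ ⊤ := by
      have h' : ξ {t} ≤ ξ (Set.Icc t t) := measure_mono (by simp)
      exact (h'.trans_lt measure_Icc_lt_top).ne
    beta_reduce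
    rw [lintegral_smul_measure,
      setLIntegral_congr_fun measurableSet_Icc
        (fun v hv => by dsimp only; rw [zetaInv_eq ξ η hv.1 hv.2] :
          Set.EqOn (fun v => f (zetaInv ξ η v)) (fun _ => f t)
            (Set.Icc (zeta ξ η t) (zeta ξ η t + (ξ {t}).toReal))),
      setLIntegral_const, Real.volume_Icc, add_sub_cancel_left, ENNReal.ofReal_toReal hfin,
      smul_eq_mul, ← mul_assoc, mul_comm _ (f t), mul_assoc, ENNReal.inv_mul_cancel h0 hfin, mul_one]
  rw [h1, h2, ← lintegral_add_measure]
  congr 1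
  have hc : {t : ℝ | ξ {t} = 0} = {t : ℝ | ξ {t} ≠ 0}ᶜ := by ext; simp
  rw [diffusePart, atomicPart, hc, add_comm, Measure.restrict_add_restrict_compl hA]
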